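/- The essential edge Laplacian L̂_e = E_T^T E_⊙^w R^T has exactly the nonzero eigenvalues of the edge Laplacian L_e = E^T E_⊙^w (with multiplicity), and the characteristic polynomial of L_e satisfies det(λI − L_e) = λ^{L−N+1} det(λI − L̂_e). -/
import Mathlib


open Matrix Polynomial

private lemma reflect_reflect' {R : Type*} [Semiring R] (N : ℕ) (p : R[X]) :
    Polynomial.reflect N (Polynomial.reflect N p) = p := by
  ext i
  simp [Polynomial.coeff_reflect, Polynomial.revAt_invol]

/-- Rectangular "AB vs BA" characteristic polynomial identity. -/
private lemma charpoly_rect_mul_comm {m n : ℕ} (h : n ≤ m)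
    (A : Matrix (Fin m) (Fin n) ℝ) (B : Matrix (Fin n) (Fin m) ℝ) :
    (A * B).charpoly = Polynomial.X ^ (m - n) * (B * A).charpoly := by
  have hrev : (A * B).charpolyRev = (B * A).charpolyRev := by
    unfold Matrix.charpolyRev
    rw [Matrix.map_mul, Matrix.map_mul, ← Matrix.smul_mul, Matrix.det_one_sub_mul_comm, Matrix.mul_smul]
  have hAB : (A * B).charpoly.natDegree = m := by
    simpa using Matrix.charpoly_natDegree_eq_dim (A * B)
  have hBA : (B * A).charpoly.natDegree = n := by
    simpa using Matrix.charpoly_natDegree_eq_dim (B * A)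
  have hrev' : (A * B).charpoly.reverse = (B * A).charpoly.reverse := by
    rw [Matrix.reverse_charpoly, Matrix.reverse_charpoly, hrev]
  have key : Polynomial.reflect m (Polynomial.X ^ (m - n) * (B * A).charpoly)
      = Polynomial.reflect m ((A * B).charpoly) := by
    have hm : m - n + n = m := Nat.sub_add_cancel h
    have hr := Polynomial.reflect_mul (Polynomial.X ^ (m - n)) ((B * A).charpoly)
      (F := m - n) (G := n) (by simp) hBA.le
    rw [hm] at hr
    rw [hr, Polynomial.reflect_monomial, Polynomial.revAt_le le_rfl, Nat.sub_self, pow_zero,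
      one_mul]
    have : Polynomial.reflect n ((B * A).charpoly) = (B * A).charpoly.reverse := by
      rw [Polynomial.reverse, hBA]
    rw [this, ← hrev', Polynomial.reverse, hAB]
  have := congrArg (Polynomial.reflect m) key
  rw [reflect_reflect', reflect_reflect'] at this
  exact this.symm

/-- The essential edge Laplacian `L̂_e = E_Tᵀ E_⊙^w Rᵀ` has exactly the
nonzero eigenvalues of the edge Laplacian `L_e = Eᵀ E_⊙^w` (with multiplicity): the
characteristic polynomials satisfy `det(λI − L_e) = λ^{L−N+1} det(λI − L̂_e)`, and the
multisets of nonzero complex eigenvalues coincide. -/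
theorem essential_edge_laplacian_charpoly
    (N L : ℕ) (hN : 0 < N) (hNL : N - 1 ≤ L)
    (E Eow : Matrix (Fin N) (Fin L) ℝ)
    (ET : Matrix (Fin N) (Fin (N - 1)) ℝ) (hETrank : ET.rank = N - 1)
    (R : Matrix (Fin (N - 1)) (Fin L) ℝ) (hER : E = ET * R)
    (Θ : Matrix (Fin L) (Fin (L - (N - 1))) ℝ)
    (hΘorth : Θᵀ * Θ = 1) (hΘflow : E * Θ = 0)
    (hΘspan : ∀ y : Fin L → ℝ, E.mulVec y = 0 → ∃ c, Θ.mulVec c = y) :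
    (Eᵀ * Eow).charpoly = Polynomial.X ^ (L - (N - 1)) * (ETᵀ * Eow * Rᵀ).charpoly ∧
    ((Eᵀ * Eow).map Complex.ofReal).charpoly.roots.filter (· ≠ 0) =
      ((ETᵀ * Eow * Rᵀ).map Complex.ofReal).charpoly.roots.filter (· ≠ 0) := by
  have hmat : Eᵀ * Eow = Rᵀ * (ETᵀ * Eow) := by
    rw [hER, Matrix.transpose_mul, Matrix.mul_assoc]
  have h1 : (Eᵀ * Eow).charpoly = Polynomial.X ^ (L - (N - 1)) * (ETᵀ * Eow * Rᵀ).charpoly := by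
    rw [hmat, charpoly_rect_mul_comm hNL, Matrix.mul_assoc]
  refine ⟨h1, ?_⟩
  have hmap1 : ((Eᵀ * Eow).map Complex.ofReal).charpoly
      = (Eᵀ * Eow).charpoly.map Complex.ofRealHom :=
    Matrix.charpoly_map _ Complex.ofRealHom
  have hmap2 : ((ETᵀ * Eow * Rᵀ).map Complex.ofReal).charpoly
      = (ETᵀ * Eow * Rᵀ).charpoly.map Complex.ofRealHom :=
    Matrix.charpoly_map _ Complex.ofRealHom
  rw [hmap1, hmap2, h1, Polynomial.map_mul, Polynomial.map_pow, Polynomial.map_X]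
  have hq : ((ETᵀ * Eow * Rᵀ).charpoly.map Complex.ofRealHom) ≠ 0 :=
    ((Matrix.charpoly_monic _).map _).ne_zero
  rw [Polynomial.roots_mul (mul_ne_zero (pow_ne_zero _ Polynomial.X_ne_zero) hq),
    Polynomial.roots_pow, Polynomial.roots_X, Multiset.filter_add]
  have : Multiset.filter (· ≠ 0) ((L - (N - 1)) • ({0} : Multiset ℂ)) = 0 := by
    simp only [Multiset.nsmul_singleton, Multiset.filter_eq_nil]
    exact fun a ha => not_not_intro (Multiset.eq_of_mem_replicate ha)
  rw [this, zero_add]
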